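/- Fix a commutative ring R and n : ℕ. Let C be the free R-module with basis {e_{i,j} | i, j ∈ Fin n, j ≤ i}, with coproduct Δ(e_{i,j}) = Σ_{k : j ≤ k ≤ i} e_{k,j} ⊗ e_{i,k}. Define the R-linear 'column shift' map m_c : C → C by m_c(e_{i,j}) = e_{i,j+1} if j+1 ≤ i, and m_c(e_{i,j}) = 0 otherwise. Then (m_c ⊗ id_C) ∘ Δ = Δ ∘ m_c as maps C → C ⊗[R] C. -/

import Mathlib

open TensorProduct

/-- Pairs `(i, j)` with `j ≤ i` in `Fin n`: positions of lower triangular matrix entries. -/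
def LTIdx (n : ℕ) := {p : Fin n × Fin n // p.2 ≤ p.1}

set_option maxHeartbeats 1000000

/-- Second part of Proposition 2: the column shift `m_c(e_{i,j}) = e_{i,j+1}` (zero if the
shifted entry leaves the lower triangle) intertwines the incidence coproduct
`Δ(e_{i,j}) = Σ_{j ≤ k ≤ i} e_{k,j} ⊗ e_{i,k}` via `(m_c ⊗ id) ∘ Δ = Δ ∘ m_c`. -/
theorem column_shift_intertwines_coproduct
    (R : Type*) [CommRing R] (n : ℕ)
    (Δ : (LTIdx n →₀ R) →ₗ[R] (LTIdx n →₀ R) ⊗[R] (LTIdx n →₀ R))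
    (hΔ : ∀ s : LTIdx n,
      Δ (Finsupp.single s 1) =
        ∑ k ∈ (Finset.Icc s.1.2 s.1.1).attach,
          Finsupp.single (⟨(k.1, s.1.2), (Finset.mem_Icc.mp k.2).1⟩ : LTIdx n) (1 : R)
            ⊗ₜ[R]
          Finsupp.single (⟨(s.1.1, k.1), (Finset.mem_Icc.mp k.2).2⟩ : LTIdx n) (1 : R))
    (mc : (LTIdx n →₀ R) →ₗ[R] (LTIdx n →₀ R))
    (hmc : ∀ s : LTIdx n,
      mc (Finsupp.single s 1) =
        if h : (s.1.2 : ℕ) + 1 ≤ (s.1.1 : ℕ) then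
          Finsupp.single
            (⟨(s.1.1, ⟨(s.1.2 : ℕ) + 1, by have := s.1.1.isLt; omega⟩),
              by rw [Fin.le_def]; exact h⟩ : LTIdx n) (1 : R)
        else 0) :
    (TensorProduct.map mc LinearMap.id) ∘ₗ Δ = Δ ∘ₗ mc := by
  apply Finsupp.lhom_ext'
  intro s
  apply LinearMap.ext_ring
  obtain ⟨⟨i, j⟩, hs⟩ := s
  unfold LTIdx at *
  simp only [LinearMap.comp_apply, Finsupp.lsingle_apply, Module.End.one_apply]
  rw [hΔ, map_sum]
  simp only [TensorProduct.map_tmul, hmc, LinearMap.id_apply]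
  set F : Fin n → (LTIdx n →₀ R) ⊗[R] (LTIdx n →₀ R) := fun k =>
    if h : (j : ℕ) + 1 ≤ (k : ℕ) ∧ (k : ℕ) ≤ (i : ℕ) then
      Finsupp.single (⟨(k, ⟨(j : ℕ) + 1, by have := k.isLt; omega⟩), by
          rw [Fin.le_def]; exact h.1⟩ : LTIdx n) (1 : R) ⊗ₜ[R]
      Finsupp.single (⟨(i, k), by rw [Fin.le_def]; exact h.2⟩ : LTIdx n) (1 : R)
    else (0 : LTIdx n →₀ R) ⊗ₜ[R] (0 : LTIdx n →₀ R) with hF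
  have key : ∀ (k : Fin n) (h : (j : ℕ) + 1 ≤ (k : ℕ) ∧ (k : ℕ) ≤ (i : ℕ))
      (p : (j : ℕ) + 1 < n) (q : (⟨(j : ℕ) + 1, p⟩ : Fin n) ≤ k)
      (q' : k ≤ i),
      F k = Finsupp.single (⟨(k, ⟨(j : ℕ) + 1, p⟩), q⟩ : LTIdx n) (1 : R) ⊗ₜ[R]
        Finsupp.single (⟨(i, k), q'⟩ : LTIdx n) (1 : R) := by
    intro k h p q q'
    simp only [hF]
    rw [dif_pos h]
    rfl
  have keyz : ∀ k : Fin n, ¬ ((j : ℕ) + 1 ≤ (k : ℕ) ∧ (k : ℕ) ≤ (i : ℕ)) →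
      F k = (0 : LTIdx n →₀ R) ⊗ₜ[R] (0 : LTIdx n →₀ R) := by
    intro k h
    simp only [hF]
    rw [dif_neg h]
  trans (∑ k : Fin n, F k)
  · rw [show (∑ k ∈ (Finset.Icc j i).attach,
        (if h : (j : ℕ) + 1 ≤ ((k : Fin n) : ℕ) then
          Finsupp.single
            (⟨((k : Fin n), ⟨(j : ℕ) + 1, by
                have := (((⟨((k : Fin n), j), (Finset.mem_Icc.mp k.2).1⟩ : LTIdx n)).1.1).isLt
                omega⟩),
              by rw [Fin.le_def]; exact h⟩ : LTIdx n) (1 : R)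
        else 0) ⊗ₜ[R]
          Finsupp.single (⟨(i, (k : Fin n)), (Finset.mem_Icc.mp k.2).2⟩ : LTIdx n) (1 : R)) =
        ∑ k ∈ (Finset.Icc j i).attach, F k.1 from ?_]
    · rw [Finset.sum_attach]
      refine Finset.sum_subset (Finset.subset_univ _) ?_
      intro k _ hk
      rw [Finset.mem_Icc] at hk
      rw [keyz k fun hc => hk ⟨Fin.le_def.mpr (by omega), Fin.le_def.mpr hc.2⟩,
        TensorProduct.zero_tmul]
      rfl
    · refine Finset.sum_congr rfl fun k _ => ?_
      have hk := Finset.mem_Icc.mp k.2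
      by_cases h : (j : ℕ) + 1 ≤ ((k : Fin n) : ℕ)
      · rw [dif_pos h, key _ ⟨h, Fin.le_def.mp hk.2⟩]
      · rw [dif_neg h, TensorProduct.zero_tmul, keyz _ (fun hc => h hc.1),
          TensorProduct.zero_tmul]
        rfl
  · by_cases hij : (j : ℕ) + 1 ≤ (i : ℕ)
    · rw [dif_pos hij, hΔ]
      rw [show (∑ k ∈ (Finset.Icc (⟨(j : ℕ) + 1, by have := hs; have := i.isLt; omega⟩ : Fin n) i).attach,
          Finsupp.single (⟨((k : Fin n), _), (Finset.mem_Icc.mp k.2).1⟩ : LTIdx n) (1 : R) ⊗ₜ[R]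
          Finsupp.single (⟨(i, (k : Fin n)), (Finset.mem_Icc.mp k.2).2⟩ : LTIdx n) (1 : R)) =
          ∑ k ∈ (Finset.Icc (⟨(j : ℕ) + 1, by have := i.isLt; omega⟩ : Fin n) i).attach, F k.1 from ?_]
      · rw [Finset.sum_attach]
        refine (Finset.sum_subset (Finset.subset_univ _) ?_).symm
        intro k _ hk
        rw [Finset.mem_Icc] at hk
        rw [keyz k fun hc => hk ⟨Fin.le_def.mpr hc.1, Fin.le_def.mpr hc.2⟩,
          TensorProduct.zero_tmul]
        rfl
      · refine Finset.sum_congr rfl fun k _ => ?_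
        have hk := Finset.mem_Icc.mp k.2
        exact (key _ ⟨Fin.le_def.mp hk.1, Fin.le_def.mp hk.2⟩ _ _ _).symm
    · rw [dif_neg hij, Δ.map_zero]
      apply Finset.sum_eq_zero
      intro k _
      rw [keyz k (by omega), TensorProduct.zero_tmul]
      rfl
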